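/- Homotopy invariance of higher homotopic distance: let α : X → X', β : X' → X, γ : Y → Y', η : Y' → Y realize homotopy equivalences X ≃ X' and Y ≃ Y', and let f_i : X → Y and g_i : X' → Y' be maps with f_i ≃ η ∘ g_i ∘ α for all i (the maps correspond under the equivalences). Then D(f_1,...,f_n) = D(g_1,...,g_n). -/

import Mathlib

open Set

/-- The `n`-th homotopic distance of maps `f 0, …, f (n-1) : X → Y`:
the least `k` admitting an open cover `U 0, …, U k` of `X` on each element of
which all the maps are pairwise homotopic; `∞` if no such cover exists. -/
noncomputable def homDist {X Y : Type*} [TopologicalSpace X] [TopologicalSpace Y]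
    {n : ℕ} (f : Fin n → C(X, Y)) : ℕ∞ :=
  sInf ((fun k : ℕ => (k : ℕ∞)) '' {k | ∃ U : Fin (k + 1) → Set X,
    (∀ j, IsOpen (U j)) ∧ (⋃ j, U j) = Set.univ ∧
    ∀ j i i', ((f i).restrict (U j)).Homotopic ((f i').restrict (U j))})

lemma homDist_le_aux {X X' Y Y' : Type*} [TopologicalSpace X]
    [TopologicalSpace X'] [TopologicalSpace Y] [TopologicalSpace Y'] {n : ℕ}
    (α : C(X, X')) (η : C(Y', Y))
    (f : Fin n → C(X, Y)) (g : Fin n → C(X', Y'))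
    (hfg : ∀ i, (f i).Homotopic ((η.comp (g i)).comp α)) :
    homDist f ≤ homDist g := by
  apply sInf_le_sInf
  rintro _ ⟨k, ⟨U, hUopen, hUcov, hU⟩, rfl⟩
  refine ⟨k, ⟨fun j => α ⁻¹' U j, fun j => (hUopen j).preimage α.continuous, ?_, ?_⟩, rfl⟩
  · rw [← Set.preimage_iUnion, hUcov, Set.preimage_univ]
  · intro j i i'
    set V : Set X := α ⁻¹' U j with hV
    have rcont : Continuous (fun x : V => (⟨α x, x.2⟩ : U j)) := by
      fun_prop
    set r : C(V, U j) := ⟨fun x => ⟨α x, x.2⟩, rcont⟩ with hr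
    have key : ∀ i : Fin n,
        ((f i).restrict V).Homotopic ((η.comp ((g i).restrict (U j))).comp r) := by
      intro i
      have h1 : ((f i).restrict V).Homotopic
          ((((η.comp (g i)).comp α)).restrict V) := by
        let incl : C(V, X) := ⟨Subtype.val, continuous_subtype_val⟩
        have := ContinuousMap.Homotopic.comp (hfg i) (ContinuousMap.Homotopic.refl incl)
        have e1 : (f i).restrict V = (f i).comp incl := by ext x; rfl
        have e2 : (((η.comp (g i)).comp α)).restrict V
            = ((η.comp (g i)).comp α).comp incl := by ext x; rfl
        rw [e1, e2]; exact this
      have e3 : (((η.comp (g i)).comp α)).restrict V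
          = (η.comp ((g i).restrict (U j))).comp r := by ext x; rfl
      rw [e3] at h1; exact h1
    have hmid : ((η.comp ((g i).restrict (U j))).comp r).Homotopic
        ((η.comp ((g i').restrict (U j))).comp r) :=
      ContinuousMap.Homotopic.comp
        (ContinuousMap.Homotopic.comp (ContinuousMap.Homotopic.refl η) (hU j i i')) (ContinuousMap.Homotopic.refl r)
    exact ((key i).trans hmid).trans (key i').symm

/-- Homotopy invariance of the higher homotopic distance: if `α, β, γ, η`
realize homotopy equivalences `X ≃ X'` and `Y ≃ Y'`, and `fᵢ ≃ η ∘ gᵢ ∘ α`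
for all `i`, then `D(f₁, …, fₙ) = D(g₁, …, gₙ)`. -/
theorem homDist_homotopy_invariant {X X' Y Y' : Type*} [TopologicalSpace X]
    [TopologicalSpace X'] [TopologicalSpace Y] [TopologicalSpace Y'] {n : ℕ}
    (α : C(X, X')) (β : C(X', X)) (γ : C(Y, Y')) (η : C(Y', Y))
    (hαβ : (α.comp β).Homotopic (ContinuousMap.id X'))
    (hβα : (β.comp α).Homotopic (ContinuousMap.id X))
    (hγη : (γ.comp η).Homotopic (ContinuousMap.id Y'))
    (hηγ : (η.comp γ).Homotopic (ContinuousMap.id Y))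
    (f : Fin n → C(X, Y)) (g : Fin n → C(X', Y'))
    (hfg : ∀ i, (f i).Homotopic ((η.comp (g i)).comp α)) :
    homDist f = homDist g := by
  have hgf : ∀ i, (g i).Homotopic ((γ.comp (f i)).comp β) := by
    intro i
    have h1 : ((γ.comp (f i)).comp β).Homotopic
        (((γ.comp η).comp (g i)).comp (α.comp β)) := by
      have e : ((γ.comp ((η.comp (g i)).comp α))).comp β
          = ((γ.comp η).comp (g i)).comp (α.comp β) := by ext x; rfl
      have := ContinuousMap.Homotopic.comp
        (ContinuousMap.Homotopic.comp (ContinuousMap.Homotopic.refl γ) (hfg i)) (ContinuousMap.Homotopic.refl β)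
      rw [e] at this; exact this
    have h2 : (((γ.comp η).comp (g i)).comp (α.comp β)).Homotopic (g i) := by
      have := ContinuousMap.Homotopic.comp (ContinuousMap.Homotopic.comp hγη (ContinuousMap.Homotopic.refl (g i))) hαβ
      simpa using this
    exact (h1.trans h2).symm
  exact le_antisymm (homDist_le_aux α η f g hfg) (homDist_le_aux β γ g f hgf)
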